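/- Let s ≥ 2 and suppose G acts faithfully and transitively on a finite set X of size n. If the translation subgroup T has exactly three orbits on X, then there is a positive divisor a of s such that every T-orbit has size a·s (hence n = 3as). -/

import Mathlib

set_option linter.unusedSectionVars false
set_option maxHeartbeats 2000000

section Words
variable {G : Type*} [Group G]

private lemma winv {a : G} (ha : a * a = 1) : a⁻¹ = a := by rw [inv_eq_iff_mul_eq_one, ha]
private lemma wsq {a : G} (ha : a * a = 1) : ∀ x : G, a * (a * x) = x := fun x => by
  rw [← mul_assoc, ha, one_mul]
private lemma wmv {a c : G} (hca : c * a = a * c) : ∀ x : G, c * (a * x) = a * (c * x) :=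
  fun x => by rw [← mul_assoc, hca, mul_assoc]
private lemma wbab {a b : G} (hbab : b * (a * b) = a * (b * a)) :
    ∀ x : G, b * (a * (b * x)) = a * (b * (a * x)) := fun x => by
  rw [← mul_assoc, ← mul_assoc, show b*a*b = a*(b*a) by rw [mul_assoc, hbab], mul_assoc, mul_assoc]
private lemma wcb {b c : G} (hcb : c * (b * (c * (b * (c * b)))) = b * (c * (b * (c * (b * c))))) :
    ∀ x : G, c * (b * (c * (b * (c * (b * x))))) = b * (c * (b * (c * (b * (c * x))))) :=
  fun x => by
  have h1 : c * (b * (c * (b * (c * b)))) * x = b * (c * (b * (c * (b * c)))) * x := by rw [hcb]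
  simpa [mul_assoc] using h1

variable {a b c u v : G}
variable (ha : a * a = 1) (hb : b * b = 1) (hc : c * c = 1)
variable (hca : c * a = a * c) (hbab : b * (a * b) = a * (b * a))
variable (hcb : c * (b * (c * (b * (c * b)))) = b * (c * (b * (c * (b * c)))))
variable (hu : u = a * (b * (c * (b * (c * b))))) (hv : v = a * (b * (c * (a * (b * c)))))

section
include ha hb hc hca hbab hcb hu hv

private lemma e_bub : b * u * b = v := by
  subst hu hv
  simp only [mul_assoc, mul_inv_rev, wsq ha, wsq hb, wsq hc, wmv hca, wbab hbab, wcb hcb,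
    ha, hb, hc, hca, hbab, hcb, mul_one, winv ha, winv hb, winv hc, one_mul]

private lemma e_cuc : c * u * c = u := by
  subst hu hv
  simp only [mul_assoc, mul_inv_rev, wsq ha, wsq hb, wsq hc, wmv hca, wbab hbab, wcb hcb,
    ha, hb, hc, hca, hbab, hcb, mul_one, winv ha, winv hb, winv hc, one_mul]

private lemma e_cvc : c * v * c = u * v⁻¹ := by
  subst hu hv
  simp only [mul_assoc, mul_inv_rev, wsq ha, wsq hb, wsq hc, wmv hca, wbab hbab, wcb hcb,
    ha, hb, hc, hca, hbab, hcb, mul_one, winv ha, winv hb, winv hc, one_mul]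

private lemma e_aua : a * u * a = u⁻¹ := by
  subst hu hv
  simp only [mul_assoc, mul_inv_rev, wsq ha, wsq hb, wsq hc, wmv hca, wbab hbab, wcb hcb,
    ha, hb, hc, hca, hbab, hcb, mul_one, winv ha, winv hb, winv hc, one_mul]

private lemma e_ava : a * v * a = u⁻¹ * v := by
  subst hu hv
  simp only [mul_assoc, mul_inv_rev, wsq ha, wsq hb, wsq hc, wmv hca, wbab hbab, wcb hcb,
    ha, hb, hc, hca, hbab, hcb, mul_one, winv ha, winv hb, winv hc, one_mul]

private lemma e_comm : u * v = v * u := by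
  subst hu hv
  simp only [mul_assoc, mul_inv_rev, wsq ha, wsq hb, wsq hc, wmv hca, wbab hbab, wcb hcb,
    ha, hb, hc, hca, hbab, hcb, mul_one, winv ha, winv hb, winv hc, one_mul]

private lemma e_rho0 : a = u * (b * (c * (b * (c * (b * c))))) * c := by
  subst hu hv
  simp only [mul_assoc, mul_inv_rev, wsq ha, wsq hb, wsq hc, wmv hca, wbab hbab, wcb hcb,
    ha, hb, hc, hca, hbab, hcb, mul_one, winv ha, winv hb, winv hc, one_mul]

private lemma e_bvb : b * v * b = u := by
  rw [← e_bub ha hb hc hca hbab hcb hu hv]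
  simp only [mul_assoc, wsq hb, hb, mul_one]
end
end Words


private lemma card_dvd_of_small_torsion {K : Type*} [CommGroup K] [Finite K] {s : ℕ}
    (hs : 0 < s)
    (htor : ∀ p : ℕ, p.Prime → Nat.card {x : K // x ^ p = 1} ≤ p)
    (hexp : ∀ x : K, x ^ s = 1) : Nat.card K ∣ s := by
  have hcards : ∀ k : ℕ, Nat.card {x : K // x ^ k = 1} =
      Nat.card ((powMonoidHom k : K →* K).ker) := by
    intro k
    apply Nat.card_congr
    exact Equiv.subtypeEquiv (Equiv.refl K) (by intro x; simp [MonoidHom.mem_ker])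
  have claim : ∀ n : ℕ, 0 < n → Nat.card {x : K // x ^ n = 1} ≤ n := by
    intro n
    induction n using Nat.strong_induction_on with
    | _ n ih =>
      intro hn
      rcases eq_or_lt_of_le (Nat.one_le_iff_ne_zero.mpr hn.ne') with h1 | h1
      · subst h1
        have hinj : Function.Injective (fun _ : {x : K // x ^ 1 = 1} => (0 : Fin 1)) := by
          intro x y _
          apply Subtype.ext
          have hx := x.2; have hy := y.2
          rw [pow_one] at hx hy
          rw [hx, hy]
        simpa using Nat.card_le_card_of_injective _ hinj
      · set p := n.minFac with hp
        have hpp : p.Prime := Nat.minFac_prime (by omega)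
        set m := n / p with hm
        have hmp : m * p = n := Nat.div_mul_cancel (Nat.minFac_dvd n)
        have hmpos : 0 < m := by
          rcases Nat.eq_zero_or_pos m with h | h
          · exfalso; rw [← hmp, h] at h1; omega
          · exact h
        have hmlt : m < n := by
          have h2 := hpp.two_le
          rw [hm]
          exact Nat.div_lt_self hn (by omega)
        set Hn : Subgroup K := (powMonoidHom n : K →* K).ker with hHn
        set Hm : Subgroup K := (powMonoidHom m : K →* K).ker with hHm
        set Hp : Subgroup K := (powMonoidHom p : K →* K).ker with hHp
        rw [hcards]
        set φ : Hn →* K := (powMonoidHom m : K →* K).comp Hn.subtype with hφ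
        have hrange : φ.range ≤ Hp := by
          rintro y ⟨⟨x, hx⟩, rfl⟩
          have hx' : x ^ n = 1 := hx
          show ((⟨x, hx⟩ : Hn) : K) ^ m ∈ Hp
          show (x ^ m) ^ p = 1
          rw [← pow_mul, hmp]
          exact hx'
        have e1 : Nat.card Hn = Nat.card (Hn ⧸ φ.ker) * Nat.card φ.ker :=
          Subgroup.card_eq_card_quotient_mul_card_subgroup φ.ker
        have e2 : Nat.card (Hn ⧸ φ.ker) = Nat.card φ.range :=
          Nat.card_congr (QuotientGroup.quotientKerEquivRange φ).toEquiv
        have b1 : Nat.card φ.range ≤ Nat.card Hp := by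
          apply Nat.card_le_card_of_injective
            (fun x => (⟨x.1, hrange x.2⟩ : Hp))
          intro x y h
          apply Subtype.ext
          simpa using h
        have b2 : Nat.card φ.ker ≤ Nat.card Hm := by
          apply Nat.card_le_card_of_injective (fun x => (⟨x.1.1, by
            show ((x.1 : K)) ^ m = 1
            exact x.2⟩ : Hm))
          intro x y h
          apply Subtype.ext; apply Subtype.ext
          simpa using h
        have hHmle : Nat.card Hm ≤ m := by rw [← hcards]; exact ih m hmlt hmpos
        have hHple : Nat.card Hp ≤ p := by rw [← hcards]; exact htor p hpp
        calc Nat.card Hn = Nat.card (Hn ⧸ φ.ker) * Nat.card φ.ker := e1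
          _ = Nat.card φ.range * Nat.card φ.ker := by rw [e2]
          _ ≤ p * m := Nat.mul_le_mul (b1.trans hHple) (b2.trans hHmle)
          _ = n := by rw [Nat.mul_comm]; exact hmp
  -- conclude
  set d := Nat.card K with hd
  have hdpos : 0 < d := Nat.card_pos
  set g := Nat.gcd d s with hg
  have hgpos : 0 < g := Nat.gcd_pos_of_pos_right _ hs
  have hallg : ∀ x : K, x ^ g = 1 := by
    intro x
    have h1 : orderOf x ∣ d := orderOf_dvd_natCard x
    have h2 : orderOf x ∣ s := orderOf_dvd_of_pow_eq_one (hexp x)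
    exact orderOf_dvd_iff_pow_eq_one.mp (Nat.dvd_gcd h1 h2)
  have : d ≤ g := by
    have := claim g hgpos
    calc d = Nat.card {x : K // x ^ g = 1} := by
          apply (Nat.card_congr _).symm
          exact Equiv.subtypeUnivEquiv hallg
      _ ≤ g := this
  have : d = g := Nat.le_antisymm this (Nat.le_of_dvd hdpos (Nat.gcd_dvd_left _ _))
  rw [this]
  exact Nat.gcd_dvd_right _ _

private lemma fix_of_three {Ω : Type*} [Finite Ω] (hcard : Nat.card Ω = 3)
    {f : Ω → Ω} (hinj : Function.Injective f) (h3 : ∀ x, f (f (f x)) = x)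
    {w : Ω} (hw : f w = w) : ∀ z, f z = z := by
  intro z
  by_contra hz
  have hzw : z ≠ w := fun h => hz (h ▸ hw)
  have hfzw : f z ≠ w := fun h => hzw (hinj (h.trans hw.symm))
  have hffznw : f (f z) ≠ w := fun h => hfzw (hinj (h.trans hw.symm))
  have hffznfz : f (f z) ≠ f z := fun h => hz (hinj h)
  have hffznz : f (f z) ≠ z := by
    intro h
    have := h3 z
    rw [h] at this
    exact hz this
  -- four distinct elements w z fz ffz
  classical
  have hfin := Fintype.ofFinite Ω
  have hc4 : ({w, z, f z, f (f z)} : Finset Ω).card = 4 := by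
    rw [Finset.card_insert_of_notMem (by
        simp only [Finset.mem_insert, Finset.mem_singleton]
        push_neg
        exact ⟨Ne.symm hzw, Ne.symm hfzw, Ne.symm hffznw⟩),
      Finset.card_insert_of_notMem (by
        simp only [Finset.mem_insert, Finset.mem_singleton]
        push_neg
        exact ⟨Ne.symm hz, Ne.symm hffznz⟩),
      Finset.card_insert_of_notMem (by
        simp only [Finset.mem_singleton]
        exact Ne.symm hffznfz),
      Finset.card_singleton]
  have h4 : 4 ≤ Nat.card Ω := by
    rw [Nat.card_eq_fintype_card, ← hc4]
    exact Finset.card_le_univ _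
  omega

private lemma zpow_reduce {G : Type*} [Group G] {g : G} {s : ℕ} (hs : 0 < s)
    (hg : g ^ s = 1) (i : ℤ) : ∃ k : Fin s, g ^ i = g ^ (k : ℕ) := by
  have hsne : (s : ℤ) ≠ 0 := by exact_mod_cast hs.ne'
  have hnn : 0 ≤ i % (s : ℤ) := Int.emod_nonneg i hsne
  have hlt : i % (s : ℤ) < s := Int.emod_lt_of_pos i (by exact_mod_cast hs)
  refine ⟨⟨(i % (s : ℤ)).toNat, ?_⟩, ?_⟩
  · omega
  · have : i = (s : ℤ) * (i / s) + i % s := (Int.mul_ediv_add_emod i s).symm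
    calc g ^ i = g ^ ((s : ℤ) * (i / s) + i % s) := by rw [← this]
      _ = (g ^ (s : ℤ)) ^ (i / s) * g ^ (i % s) := by rw [zpow_add, zpow_mul]
      _ = g ^ (i % s) := by
          rw [zpow_natCast, hg, one_zpow, one_mul]
      _ = g ^ (((i % (s : ℤ)).toNat : ℤ)) := by rw [Int.toNat_of_nonneg hnn]
      _ = g ^ ((i % (s : ℤ)).toNat : ℕ) := zpow_natCast _ _


theorem stmt16 (s : ℕ) (hs : 2 ≤ s)
    (G : Type*) [Group G] [Finite G] (ρ0 ρ1 ρ2 : G)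
    (hgen : Subgroup.closure {ρ0, ρ1, ρ2} = ⊤)
    (hr0 : ρ0 ^ 2 = 1) (hr1 : ρ1 ^ 2 = 1) (hr2 : ρ2 ^ 2 = 1)
    (h01 : (ρ0 * ρ1) ^ 3 = 1) (h12 : (ρ1 * ρ2) ^ 6 = 1) (h02 : (ρ0 * ρ2) ^ 2 = 1)
    (hmap : (ρ0 * ρ1 * ρ2) ^ (2 * s) = 1)
    (hG : Nat.card G = 12 * s ^ 2)
    (u v : G) (hu : u = ρ0 * (ρ1 * ρ2) ^ 2 * ρ1) (hv : v = (ρ0 * ρ1 * ρ2) ^ 2)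
    (T : Subgroup G) (hT : T = Subgroup.closure {u, v})
    (X : Type*) [Finite X] [MulAction G X]
    (hfaith : ∀ a : G, (∀ x : X, a • x = x) → a = 1)
    (htrans : ∀ x y : X, ∃ a : G, a • x = y)
    (n : ℕ) (hn : Nat.card X = n)
    (horb : Nat.card (MulAction.orbitRel.Quotient T X) = 3) :
    ∃ a : ℕ, 0 < a ∧ a ∣ s ∧
      (∀ x : X, Nat.card (MulAction.orbit T x) = a * s) ∧ n = 3 * (a * s) := by
  classical
  have hspos : 0 < s := by omega
  -- §1 basic letter relations
  have ha : ρ0 * ρ0 = 1 := by rw [← sq]; exact hr0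
  have hb : ρ1 * ρ1 = 1 := by rw [← sq]; exact hr1
  have hc : ρ2 * ρ2 = 1 := by rw [← sq]; exact hr2
  have hca : ρ2 * ρ0 = ρ0 * ρ2 := by
    have h : (ρ0 * ρ2) * (ρ0 * ρ2) = 1 := by rw [← sq]; exact h02
    calc ρ2 * ρ0 = (ρ0 * ρ2)⁻¹ := by rw [mul_inv_rev, winv ha, winv hc]
      _ = ρ0 * ρ2 := by rw [inv_eq_iff_mul_eq_one]; exact h
  have hbab : ρ1 * (ρ0 * ρ1) = ρ0 * (ρ1 * ρ0) := by
    have e : ρ0 * (ρ1 * (ρ0 * (ρ1 * (ρ0 * ρ1)))) = 1 := by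
      rw [← h01]; simp [pow_succ, mul_assoc]
    have e2 : ρ1 * (ρ0 * (ρ1 * (ρ0 * ρ1))) = ρ0 := by
      have := congrArg (fun x => ρ0 * x) e
      simpa only [wsq ha, mul_one] using this
    have := congrArg (fun x => x * (ρ1 * ρ0)) e2
    simp only [mul_assoc] at this
    simpa only [wsq ha, wsq hb, ha, hb, mul_one, mul_assoc] using this
  have hcb : ρ2 * (ρ1 * (ρ2 * (ρ1 * (ρ2 * ρ1)))) = ρ1 * (ρ2 * (ρ1 * (ρ2 * (ρ1 * ρ2)))) := by
    have e : ((ρ1*ρ2)^3) * ((ρ1*ρ2)^3) = 1 := by rw [← h12]; simp [pow_succ, mul_assoc]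
    have e1 : ((ρ1*ρ2)^3)⁻¹ = (ρ1*ρ2)^3 := inv_eq_of_mul_eq_one_left e
    calc ρ2 * (ρ1 * (ρ2 * (ρ1 * (ρ2 * ρ1)))) = ((ρ1*ρ2)^3)⁻¹ := by
          rw [show ((ρ1*ρ2)^3)⁻¹ = ρ2⁻¹ * (ρ1⁻¹ * (ρ2⁻¹ * (ρ1⁻¹ * (ρ2⁻¹ * ρ1⁻¹)))) by
              simp [pow_succ, mul_assoc, mul_inv_rev],
            winv hb, winv hc]
      _ = (ρ1*ρ2)^3 := e1
      _ = ρ1 * (ρ2 * (ρ1 * (ρ2 * (ρ1 * ρ2)))) := by simp [pow_succ, mul_assoc]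
  have hu2 : u = ρ0 * (ρ1 * (ρ2 * (ρ1 * (ρ2 * ρ1)))) := by rw [hu]; simp [pow_succ, mul_assoc]
  have hv2 : v = ρ0 * (ρ1 * (ρ2 * (ρ0 * (ρ1 * ρ2)))) := by rw [hv]; simp [pow_succ, mul_assoc]
  -- §2 key word identities
  have Ebub : ρ1 * u * ρ1 = v := e_bub ha hb hc hca hbab hcb hu2 hv2
  have Ebvb : ρ1 * v * ρ1 = u := e_bvb ha hb hc hca hbab hcb hu2 hv2
  have Ecuc : ρ2 * u * ρ2 = u := e_cuc ha hb hc hca hbab hcb hu2 hv2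
  have Ecvc : ρ2 * v * ρ2 = u * v⁻¹ := e_cvc ha hb hc hca hbab hcb hu2 hv2
  have Eaua : ρ0 * u * ρ0 = u⁻¹ := e_aua ha hb hc hca hbab hcb hu2 hv2
  have Eava : ρ0 * v * ρ0 = u⁻¹ * v := e_ava ha hb hc hca hbab hcb hu2 hv2
  have Ecomm : u * v = v * u := e_comm ha hb hc hca hbab hcb hu2 hv2
  have Erho0 : ρ0 = u * (ρ1*ρ2)^3 * ρ2 := by
    have h := e_rho0 ha hb hc hca hbab hcb hu2 hv2
    rw [h]; simp [pow_succ, mul_assoc]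
  -- §3 membership
  have hum : u ∈ T := by rw [hT]; exact Subgroup.subset_closure (by simp)
  have hvm : v ∈ T := by rw [hT]; exact Subgroup.subset_closure (by simp)
  -- §4 T is normal
  have hTnorm : T.Normal := by
    rw [← Subgroup.normalizer_eq_top_iff, eq_top_iff, ← hgen]
    apply Subgroup.closure_le _ |>.mpr
    have key : ∀ g : G, g * g = 1 → g * u * g⁻¹ ∈ T → g * v * g⁻¹ ∈ T →
        g ∈ Subgroup.normalizer (T : Set G) := by
      intro g hg h1 h2
      have fwd : ∀ h ∈ T, g * h * g⁻¹ ∈ T := by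
        intro h hh
        have hle : Subgroup.closure ({u, v} : Set G) ≤ T.comap (MulAut.conj g).toMonoidHom := by
          apply Subgroup.closure_le _ |>.mpr
          intro x hx
          rcases hx with hx | hx
          · subst hx; simpa [Subgroup.mem_comap, MulAut.conj_apply] using h1
          · simp only [Set.mem_singleton_iff] at hx
            subst hx; simpa [Subgroup.mem_comap, MulAut.conj_apply] using h2
        have := hle (hT ▸ hh)
        simpa [Subgroup.mem_comap, MulAut.conj_apply] using this
      rw [Subgroup.mem_normalizer_iff]
      intro h
      constructor
      · exact fwd h
      · intro hh
        have h2 := fwd _ hh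
        have hginv : g⁻¹ = g := winv hg
        have : g * (g * h * g⁻¹) * g⁻¹ = h := by
          rw [hginv]
          simp only [mul_assoc, wsq hg, hg, mul_one]
        rwa [this] at h2
    intro x hx
    rw [SetLike.mem_coe]
    rcases hx with hx | hx | hx
    · rw [hx]
      refine key ρ0 ha ?_ ?_
      · rw [winv ha, Eaua]; exact inv_mem hum
      · rw [winv ha, Eava]; exact mul_mem (inv_mem hum) hvm
    · rw [hx]
      refine key ρ1 hb ?_ ?_
      · rw [winv hb, Ebub]; exact hvm
      · rw [winv hb, Ebvb]; exact hum
    · simp only [Set.mem_singleton_iff] at hx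
      rw [hx]
      refine key ρ2 hc ?_ ?_
      · rw [winv hc, Ecuc]; exact hum
      · rw [winv hc, Ecvc]; exact mul_mem hum (inv_mem hvm)
  have hconjT : ∀ (g t : G), t ∈ T → g * t * g⁻¹ ∈ T := fun g t ht => hTnorm.conj_mem t ht g
  -- §5 commutativity of T
  have hcommUV : ∀ x ∈ T, ∀ y ∈ T, x * y = y * x := by
    have hstep : ∀ y ∈ T, u * y = y * u ∧ v * y = y * v := by
      intro y hy
      have hT1 : Subgroup.closure ({u, v} : Set G) ≤ Subgroup.centralizer {u, v} := by
        apply Subgroup.closure_le _ |>.mpr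
        intro x hx
        rw [SetLike.mem_coe, Subgroup.mem_centralizer_iff]
        intro g hg
        rcases hx with hx | hx
        · rcases hg with hg | hg
          · rw [hx, hg]
          · simp only [Set.mem_singleton_iff] at hg; rw [hx, hg]; exact Ecomm.symm
        · simp only [Set.mem_singleton_iff] at hx
          rcases hg with hg | hg
          · rw [hx, hg]; exact Ecomm
          · simp only [Set.mem_singleton_iff] at hg; rw [hx, hg]
      have hy' := hT1 (hT ▸ hy)
      rw [Subgroup.mem_centralizer_iff] at hy'
      exact ⟨hy' u (by simp), hy' v (by simp)⟩
    intro x hx y hy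
    have hx' : x ∈ Subgroup.centralizer {y} := by
      have hle : Subgroup.closure ({u, v} : Set G) ≤ Subgroup.centralizer {y} := by
        apply Subgroup.closure_le _ |>.mpr
        intro g hg
        rw [SetLike.mem_coe, Subgroup.mem_centralizer_iff]
        intro h hh
        simp only [Set.mem_singleton_iff] at hh
        rw [hh]
        rcases hg with hg | hg
        · rw [hg]; exact ((hstep y hy).1).symm
        · simp only [Set.mem_singleton_iff] at hg
          rw [hg]; exact ((hstep y hy).2).symm
      exact hle (hT ▸ hx)
    rw [Subgroup.mem_centralizer_iff] at hx'
    exact (hx' y (by simp)).symm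
  -- §6 v^s = u^s = 1
  have hvs : v ^ s = 1 := by rw [hv, ← pow_mul]; exact hmap
  have hus : u ^ s = 1 := by
    have h1 : u = ρ1 * v * ρ1⁻¹ := by rw [winv hb]; exact Ebvb.symm
    have h2 : (ρ1 * v * ρ1⁻¹) ^ s = ρ1 * v ^ s * ρ1⁻¹ := by
      rw [show ρ1 * v * ρ1⁻¹ = (MulAut.conj ρ1) v from rfl, ← map_pow]
      rfl
    rw [h1, h2, hvs]
    simp
  
  -- §7 elements of T are u^i v^j
  have hCuv : Commute u v := Ecomm
  have hTmem : ∀ t ∈ T, ∃ i j : ℤ, t = u ^ i * v ^ j := by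
    intro t ht
    rw [hT] at ht
    induction ht using Subgroup.closure_induction with
    | mem x hx =>
      rcases hx with hx | hx
      · exact ⟨1, 0, by rw [hx]; simp⟩
      · simp only [Set.mem_singleton_iff] at hx
        exact ⟨0, 1, by rw [hx]; simp⟩
    | one => exact ⟨0, 0, by simp⟩
    | mul x y hx hy ihx ihy =>
      obtain ⟨i, j, hij⟩ := ihx
      obtain ⟨k, l, hkl⟩ := ihy
      refine ⟨i + k, j + l, ?_⟩
      calc x * y = u^i * (v^j * u^k) * v^l := by rw [hij, hkl]; simp [mul_assoc]
        _ = u^i * (u^k * v^j) * v^l := by rw [← (hCuv.zpow_zpow k j).eq]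
        _ = u^(i+k) * v^(j+l) := by rw [zpow_add, zpow_add]; simp [mul_assoc]
    | inv x hx ih =>
      obtain ⟨i, j, hij⟩ := ih
      refine ⟨-i, -j, ?_⟩
      rw [hij, mul_inv_rev, ← zpow_neg, ← zpow_neg]
      exact ((hCuv.zpow_zpow (-i) (-j)).eq).symm
  have hTfin : ∀ t ∈ T, ∃ i j : Fin s, t = u ^ (i : ℕ) * v ^ (j : ℕ) := by
    intro t ht
    obtain ⟨i, j, hij⟩ := hTmem t ht
    obtain ⟨ki, hki⟩ := zpow_reduce hspos hus i
    obtain ⟨kj, hkj⟩ := zpow_reduce hspos hvs j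
    exact ⟨ki, kj, by rw [hij, hki, hkj]⟩
  have hexpT : ∀ t ∈ T, t ^ s = 1 := by
    intro t ht
    obtain ⟨i, j, hij⟩ := hTfin t ht
    rw [hij, (hCuv.pow_pow _ _).mul_pow, ← pow_mul, ← pow_mul,
      mul_comm (i:ℕ) s, mul_comm (j:ℕ) s, pow_mul, pow_mul, hus, hvs, one_pow, one_pow, one_mul]
  -- F : Fin s × Fin s → T
  have hFmem : ∀ p : Fin s × Fin s, u ^ (p.1 : ℕ) * v ^ (p.2 : ℕ) ∈ T :=
    fun p => mul_mem (pow_mem hum _) (pow_mem hvm _)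
  set Fsub : Fin s × Fin s → ↥T := fun p => ⟨u ^ (p.1 : ℕ) * v ^ (p.2 : ℕ), hFmem p⟩
    with hFsub
  have hFsurj : Function.Surjective Fsub := by
    intro t
    obtain ⟨i, j, h⟩ := hTfin t t.2
    exact ⟨(i, j), Subtype.ext h.symm⟩
  have hcardTle : Nat.card ↥T ≤ s * s := by
    simpa using Nat.card_le_card_of_surjective _ hFsurj
  -- §8 coset covering
  set r : G := ρ1 * ρ2 with hrdef
  have hr6 : r ^ 6 = 1 := h12
  have hcrc : ρ2 * r * ρ2⁻¹ = r⁻¹ := by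
    rw [winv hc, hrdef, mul_inv_rev, winv hb, winv hc]
    simp only [mul_assoc, wsq hc, hc, mul_one]
  have hcr : ∀ i : ℤ, ρ2 * r ^ i = r ^ (-i) * ρ2 := by
    intro i
    have h1 : ρ2 * r ^ i * ρ2⁻¹ = (ρ2 * r * ρ2⁻¹) ^ i := by
      rw [show ρ2 * r * ρ2⁻¹ = (MulAut.conj ρ2) r from rfl, ← map_zpow]
      rfl
    rw [hcrc] at h1
    have h2 : (r⁻¹) ^ i = r ^ (-i) := by rw [inv_zpow, zpow_neg]
    rw [h2] at h1
    exact mul_inv_eq_iff_eq_mul.mp h1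
  have hb_eq : ρ1 = r * ρ2 := by rw [hrdef, mul_assoc, hc, mul_one]
  have Erho0' : ρ0 = u * r ^ (3:ℤ) * ρ2 := by
    rw [show r ^ (3:ℤ) = r ^ (3:ℕ) by norm_cast]
    exact Erho0
  have step : ∀ x ∈ ({ρ0, ρ1, ρ2} : Set G), ∀ g : G,
      (∃ (i : ℤ) (e : ℕ) (t : G), t ∈ T ∧ g = r ^ i * ρ2 ^ e * t) →
      (∃ (i : ℤ) (e : ℕ) (t : G), t ∈ T ∧ x * g = r ^ i * ρ2 ^ e * t) := by
    rintro x hx g ⟨i, e, t, ht, rfl⟩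
    rcases hx with hx | hx | hx
    · -- ρ0
      set w : G := r ^ (3 + -i) * ρ2 ^ (e + 1) with hw
      refine ⟨3 + -i, e + 1, (w⁻¹ * u * w) * t,
        mul_mem (by simpa using hconjT w⁻¹ u hum) ht, ?_⟩
      rw [hx]
      calc ρ0 * (r ^ i * ρ2 ^ e * t)
          = u * (r ^ (3:ℤ) * (ρ2 * r ^ i)) * ρ2 ^ e * t := by
            rw [Erho0']; simp [mul_assoc]
        _ = u * (r ^ (3:ℤ) * (r ^ (-i) * ρ2)) * ρ2 ^ e * t := by rw [hcr i]
        _ = u * w * t := by rw [hw, zpow_add, pow_succ']; simp [mul_assoc]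
        _ = w * (w⁻¹ * u * w * t) := by simp [mul_assoc]
        _ = r ^ (3 + -i) * ρ2 ^ (e + 1) * (w⁻¹ * u * w * t) := by rw [← hw]
    · -- ρ1
      refine ⟨1 + -i, e + 1, t, ht, ?_⟩
      rw [hx]
      calc ρ1 * (r ^ i * ρ2 ^ e * t) = (r * (ρ2 * r ^ i)) * ρ2 ^ e * t := by
            rw [hb_eq]; simp [mul_assoc]
        _ = (r * (r ^ (-i) * ρ2)) * ρ2 ^ e * t := by rw [hcr i]
        _ = r ^ (1 + -i) * ρ2 ^ (e + 1) * t := by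
            rw [zpow_add, zpow_one, pow_succ']; simp [mul_assoc]
    · -- ρ2
      simp only [Set.mem_singleton_iff] at hx
      refine ⟨-i, e + 1, t, ht, ?_⟩
      rw [hx]
      calc ρ2 * (r ^ i * ρ2 ^ e * t) = (ρ2 * r ^ i) * ρ2 ^ e * t := by simp [mul_assoc]
        _ = (r ^ (-i) * ρ2) * ρ2 ^ e * t := by rw [hcr i]
        _ = r ^ (-i) * ρ2 ^ (e + 1) * t := by rw [pow_succ']; simp [mul_assoc]
  have hinvgen : ∀ x ∈ ({ρ0, ρ1, ρ2} : Set G), x⁻¹ = x := by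
    intro x hx
    rcases hx with hx | hx | hx
    · rw [hx]; exact winv ha
    · rw [hx]; exact winv hb
    · simp only [Set.mem_singleton_iff] at hx; rw [hx]; exact winv hc
  have hcover : ∀ g : G, ∃ (i : ℤ) (e : ℕ) (t : G), t ∈ T ∧ g = r ^ i * ρ2 ^ e * t := by
    intro g
    have hg : g ∈ Subgroup.closure {ρ0, ρ1, ρ2} := by rw [hgen]; trivial
    induction hg using Subgroup.closure_induction_left with
    | one => exact ⟨0, 0, 1, one_mem T, by simp⟩
    | mul_left x hx y hy ih => exact step x hx y ih
    | inv_mul_cancel x hx y hy ih => rw [hinvgen x hx]; exact step x hx y ih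
  -- §9 card T = s^2 and coset distinctness
  set ψ : Fin 6 × Fin 2 × ↥T → G :=
    fun q => r ^ (q.1 : ℕ) * ρ2 ^ (q.2.1 : ℕ) * (q.2.2 : G) with hψ
  have hψsurj : Function.Surjective ψ := by
    intro g
    obtain ⟨i, e, t, ht, rfl⟩ := hcover g
    obtain ⟨ki, hki⟩ := zpow_reduce (by norm_num : 0 < 6) hr6 i
    obtain ⟨ke, hke⟩ := zpow_reduce (by norm_num : 0 < 2)
      (show ρ2 ^ 2 = 1 from hr2) (e : ℤ)
    refine ⟨(ki, ke, ⟨t, ht⟩), ?_⟩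
    have he : ρ2 ^ e = ρ2 ^ ((ke : ℕ)) := by rw [← zpow_natCast ρ2 e, hke]
    show r ^ (ki : ℕ) * ρ2 ^ ((ke : ℕ)) * t = r ^ i * ρ2 ^ e * t
    rw [hki, he]
  have hcardG12 : Nat.card G ≤ 12 * Nat.card ↥T := by
    have h := Nat.card_le_card_of_surjective _ hψsurj
    have hd : Nat.card (Fin 6 × Fin 2 × ↥T) = 12 * Nat.card ↥T := by
      simp only [Nat.card_prod, Nat.card_eq_fintype_card, Fintype.card_fin]
      ring
    omega
  have hTcard : Nat.card ↥T = s ^ 2 := by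
    have h1 : 12 * s ^ 2 ≤ 12 * Nat.card ↥T := by rw [← hG]; exact hcardG12
    have h2 : Nat.card ↥T ≤ s ^ 2 := by rw [sq]; exact hcardTle
    omega
  have hψcard : Nat.card (Fin 6 × Fin 2 × ↥T) = Nat.card G := by
    simp [Nat.card_prod, hTcard, hG]
    ring
  have hψbij : Function.Bijective ψ :=
    (Nat.bijective_iff_surjective_and_card ψ).mpr ⟨hψsurj, hψcard⟩
  have hr2T : (r ^ 2 : G) ∉ T := by
    intro hmem
    have h1 : ψ (⟨2, by norm_num⟩, ⟨0, by norm_num⟩, 1) = ψ (⟨0, by norm_num⟩, ⟨0, by norm_num⟩, ⟨r ^ 2, hmem⟩) := by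
      show r ^ (2:ℕ) * ρ2 ^ (0:ℕ) * 1 = r ^ (0:ℕ) * ρ2 ^ (0:ℕ) * (r^2)
      simp
    have := hψbij.injective h1
    have h2 := congrArg (fun q => (q.1 : Fin 6)) this
    simp at h2
  have hr4T : (r ^ 4 : G) ∉ T := by
    intro hmem
    have h1 : ψ (⟨4, by norm_num⟩, ⟨0, by norm_num⟩, 1) = ψ (⟨0, by norm_num⟩, ⟨0, by norm_num⟩, ⟨r ^ 4, hmem⟩) := by
      show r ^ (4:ℕ) * ρ2 ^ (0:ℕ) * 1 = r ^ (0:ℕ) * ρ2 ^ (0:ℕ) * (r^4)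
      simp
    have := hψbij.injective h1
    have h2 := congrArg (fun q => (q.1 : Fin 6)) this
    simp at h2
  have hFcard : Nat.card (Fin s × Fin s) = Nat.card ↥T := by
    simp [Nat.card_prod, hTcard]
    ring
  have hFbij : Function.Bijective Fsub :=
    (Nat.bijective_iff_surjective_and_card Fsub).mpr ⟨hFsurj, hFcard⟩
  
  -- §10 orbit machinery
  have hXne : Nonempty X := by
    by_contra h
    rw [not_nonempty_iff] at h
    have hE : IsEmpty (MulAction.orbitRel.Quotient (↥T) X) :=
      ⟨fun q => Quotient.inductionOn' q fun x => h.false x⟩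
    rw [Nat.card_of_isEmpty] at horb
    omega
  obtain ⟨x₀⟩ := hXne
  have horbsmul : ∀ (g : G) (x y : X), y ∈ MulAction.orbit (↥T) x →
      g • y ∈ MulAction.orbit (↥T) (g • x) := by
    intro g x y hy
    obtain ⟨t, ht⟩ := MulAction.mem_orbit_iff.mp hy
    refine MulAction.mem_orbit_iff.mpr ⟨⟨g * (t : G) * g⁻¹, hconjT g t t.2⟩, ?_⟩
    show (g * (t : G) * g⁻¹) • (g • x) = g • y
    calc (g * (t : G) * g⁻¹) • (g • x) = (g * (t : G) * g⁻¹ * g) • x := by rw [smul_smul]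
      _ = (g * (t : G)) • x := by simp [mul_assoc]
      _ = g • ((t : G) • x) := by rw [mul_smul]
      _ = g • y := by rw [show ((t : G) • x) = y from ht]
  have horbcard : ∀ x y : X, Nat.card (MulAction.orbit (↥T) x) = Nat.card (MulAction.orbit (↥T) y) := by
    intro x y
    obtain ⟨g, hg⟩ := htrans x y
    have hbij : Function.Bijective (fun z : MulAction.orbit (↥T) x =>
        (⟨g • (z : X), hg ▸ horbsmul g x z z.2⟩ : MulAction.orbit (↥T) y)) := by
      constructor
      · intro z w h
        apply Subtype.ext
        have h2 := congrArg Subtype.val h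
        simp only at h2
        exact smul_left_cancel g h2
      · intro w
        have hw : (g⁻¹ • (w : X)) ∈ MulAction.orbit (↥T) x := by
          have h3 := horbsmul g⁻¹ y w w.2
          have h4 : g⁻¹ • y = x := by rw [← hg, inv_smul_smul]
          rwa [h4] at h3
        exact ⟨⟨g⁻¹ • (w : X), hw⟩, Subtype.ext (by simp)⟩
    exact Nat.card_congr (Equiv.ofBijective _ hbij)
  set m : ℕ := Nat.card (MulAction.orbit (↥T) x₀) with hm
  have hXcard : Nat.card X = 3 * m := by
    letI := Fintype.ofFinite X
    letI : Fintype (MulAction.orbitRel.Quotient (↥T) X) := Fintype.ofFinite _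
    letI : ∀ ω : MulAction.orbitRel.Quotient (↥T) X, Fintype ω.orbit :=
      fun ω => Fintype.ofFinite _
    have e := MulAction.selfEquivSigmaOrbits' (↥T) X
    rw [Nat.card_eq_fintype_card, Fintype.card_congr e, Fintype.card_sigma]
    have hcc : ∀ ω : MulAction.orbitRel.Quotient (↥T) X, Fintype.card ω.orbit = m := by
      intro ω
      rw [← Nat.card_eq_fintype_card]
      rw [MulAction.orbitRel.Quotient.orbit_eq_orbit_out ω Quotient.out_eq']
      exact horbcard _ x₀
    rw [Finset.sum_congr rfl (fun ω _ => hcc ω), Finset.sum_const, smul_eq_mul,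
      Finset.card_univ, ← Nat.card_eq_fintype_card, horb]
  set K : Subgroup G := T ⊓ MulAction.stabilizer G x₀ with hK
  have hKstab : Nat.card ↥(MulAction.stabilizer (↥T) x₀) = Nat.card ↥K := by
    apply Nat.card_congr
    refine ⟨fun a => ⟨a.1.1, a.1.2, a.2⟩, fun b => ⟨⟨b.1, b.2.1⟩, b.2.2⟩, ?_, ?_⟩
    · intro a; rfl
    · intro b; rfl
  have hOS : m * Nat.card ↥K = s ^ 2 := by
    rw [← hKstab, ← hTcard, hm, ← Nat.card_prod]
    exact Nat.card_congr (MulAction.orbitProdStabilizerEquivGroup (↥T) x₀)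
  -- §11 the induced maps on the orbit space
  set Ω := MulAction.orbitRel.Quotient (↥T) X with hΩ
  set σact : G → Ω → Ω := fun g => Quotient.map' (fun x => g • x)
    (fun x y h => horbsmul g y x h) with hσact
  have σmk : ∀ (g : G) (x : X),
      σact g (Quotient.mk'' x) = Quotient.mk'' (g • x) := fun g x => rfl
  have σcomp : ∀ (g h : G) (ω : Ω), σact g (σact h ω) = σact (g * h) ω := by
    intro g h ω
    induction ω using Quotient.inductionOn' with
    | h x => rw [σmk, σmk, σmk, mul_smul]
  have σone : ∀ ω : Ω, σact 1 ω = ω := by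
    intro ω
    induction ω using Quotient.inductionOn' with
    | h x => rw [σmk, one_smul]
  have σinj : ∀ g : G, Function.Injective (σact g) := by
    intro g a b h
    have h2 := congrArg (σact g⁻¹) h
    rw [σcomp, σcomp, inv_mul_cancel, σone, σone] at h2
    exact h2
  set g₀ : G := r ^ 2 with hg₀def
  have hg₀3 : g₀ ^ 3 = 1 := by rw [hg₀def, ← pow_mul]; exact hr6
  have σ3 : ∀ ω : Ω, σact g₀ (σact g₀ (σact g₀ ω)) = ω := by
    intro ω
    rw [σcomp, σcomp]
    rw [show g₀ * g₀ * g₀ = g₀ ^ 3 by rw [pow_succ, pow_succ, pow_one]]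
    rw [hg₀3, σone]
  set c₀ : Ω := Quotient.mk'' x₀ with hc₀
  -- key dichotomy
  by_cases hfix : ∃ w : Ω, σact g₀ w = w
  · -- bad case: σ has a fixed point hence is the identity; derive a contradiction
    exfalso
    obtain ⟨w, hw⟩ := hfix
    have hall : ∀ z : Ω, σact g₀ z = z :=
      fix_of_three horb (σinj g₀) σ3 hw
    have hfixall : ∀ x : X, g₀ • x ∈ MulAction.orbit (↥T) x := by
      intro x
      have := hall (Quotient.mk'' x)
      rw [σmk] at this
      exact Quotient.eq''.mp this
    -- the subgroup of elements fixing every T-orbit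
    have horbsymm : ∀ (x y : X), x ∈ MulAction.orbit (↥T) y → y ∈ MulAction.orbit (↥T) x := by
      intro x y hxy
      rw [MulAction.orbit_eq_iff.mpr hxy]
      exact MulAction.mem_orbit_self y
    set N : Subgroup G := {
      carrier := {g : G | ∀ x : X, g • x ∈ MulAction.orbit (↥T) x}
      one_mem' := by intro x; rw [one_smul]; exact MulAction.mem_orbit_self x
      mul_mem' := by
        intro a b ha hb x
        rw [mul_smul]
        have h1 := ha (b • x)
        rwa [MulAction.orbit_eq_iff.mpr (hb x)] at h1
      inv_mem' := by
        intro a ha x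
        have h1 := ha (a⁻¹ • x)
        rw [smul_inv_smul] at h1
        exact horbsymm _ _ h1 } with hN
    have hTN : ∀ t : G, t ∈ T → t ∈ N := by
      intro t ht x
      exact MulAction.mem_orbit_iff.mpr ⟨⟨t, ht⟩, rfl⟩
    have hg₀N : g₀ ∈ N := hfixall
    have hdT : ∀ d : ℕ, d < 3 → g₀ ^ d ∈ T → d = 0 := by
      intro d hd hdT
      interval_cases d
      · rfl
      · exfalso; apply hr2T; rw [hg₀def] at hdT; rwa [pow_one] at hdT
      · exfalso; apply hr4T
        rw [hg₀def, ← pow_mul] at hdT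
        norm_num at hdT
        exact hdT
    have hNinj : Function.Injective (fun q : Fin 3 × ↥T =>
        (⟨g₀ ^ (q.1 : ℕ) * (q.2 : G), mul_mem (pow_mem hg₀N _) (hTN _ q.2.2)⟩ : ↥N)) := by
      rintro ⟨i, t⟩ ⟨j, t'⟩ h
      have h2 : g₀ ^ (i : ℕ) * (t : G) = g₀ ^ (j : ℕ) * (t' : G) := by
        have := congrArg Subtype.val h
        simpa using this
      have key : ∀ (i j : Fin 3) (t t' : ↥T), g₀ ^ (i : ℕ) * (t : G) = g₀ ^ (j : ℕ) * (t' : G) →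
          (i : ℕ) ≤ (j : ℕ) → i = j ∧ (t : G) = (t' : G) := by
        intro i j t t' heq hle
        have hsplit : g₀ ^ (j : ℕ) = g₀ ^ (i : ℕ) * g₀ ^ ((j : ℕ) - (i : ℕ)) := by
          rw [← pow_add]
          congr 1
          omega
        rw [hsplit, mul_assoc] at heq
        have heq2 : (t : G) = g₀ ^ ((j : ℕ) - (i : ℕ)) * (t' : G) := mul_left_cancel heq
        have hmem : g₀ ^ ((j : ℕ) - (i : ℕ)) ∈ T := by
          have : g₀ ^ ((j : ℕ) - (i : ℕ)) = (t : G) * (t' : G)⁻¹ := by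
            rw [heq2]; group
          rw [this]; exact mul_mem t.2 (inv_mem t'.2)
        have hd0 : (j : ℕ) - (i : ℕ) = 0 := hdT _ (by omega) hmem
        have hij : (i : ℕ) = (j : ℕ) := by omega
        refine ⟨Fin.ext hij, ?_⟩
        rw [heq2, hd0, pow_zero, one_mul]
      rcases le_total (i : ℕ) (j : ℕ) with hle | hle
      · obtain ⟨hij, htt⟩ := key i j t t' h2 hle
        exact Prod.ext hij (Subtype.ext htt)
      · obtain ⟨hij, htt⟩ := key j i t' t h2.symm hle
        exact Prod.ext hij.symm (Subtype.ext htt.symm)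
    have hNge : 3 * s ^ 2 ≤ Nat.card ↥N := by
      have h := Nat.card_le_card_of_injective _ hNinj
      have hd : Nat.card (Fin 3 × ↥T) = 3 * s ^ 2 := by
        rw [Nat.card_prod, hTcard, Nat.card_eq_fintype_card, Fintype.card_fin]
      omega
    -- G acts on Ω
    letI actΩ : MulAction G Ω := {
      smul := σact
      one_smul := σone
      mul_smul := fun g h ω => (σcomp g h ω).symm }
    have hsmulΩ : ∀ (g : G) (ω : Ω), g • ω = σact g ω := fun _ _ => rfl
    have horbΩ : MulAction.orbit G c₀ = Set.univ := by
      ext ω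
      simp only [Set.mem_univ, iff_true]
      induction ω using Quotient.inductionOn' with
      | h x =>
        obtain ⟨g, hg⟩ := htrans x₀ x
        refine MulAction.mem_orbit_iff.mpr ⟨g, ?_⟩
        rw [hsmulΩ, hc₀, σmk, hg]
    have hcardorbΩ : Nat.card (MulAction.orbit G c₀) = 3 := by
      rw [← horb]
      apply Nat.card_congr
      rw [horbΩ]
      exact Equiv.Set.univ Ω
    have hstabΩ : Nat.card ↥(MulAction.stabilizer G c₀) = 4 * s ^ 2 := by
      have hOS2 : Nat.card (MulAction.orbit G c₀) *
          Nat.card ↥(MulAction.stabilizer G c₀) = Nat.card G := by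
        rw [← Nat.card_prod]
        exact Nat.card_congr (MulAction.orbitProdStabilizerEquivGroup G c₀)
      rw [hcardorbΩ, hG] at hOS2
      omega
    have hNle : N ≤ MulAction.stabilizer G c₀ := by
      intro g hg
      rw [MulAction.mem_stabilizer_iff, hsmulΩ, hc₀, σmk]
      exact Quotient.sound' (hg x₀)
    have hNdvd : Nat.card ↥N ∣ 4 * s ^ 2 := by
      rw [← hstabΩ]
      exact Subgroup.card_dvd_of_le hNle
    have hs2pos : 0 < s ^ 2 := by positivity
    have hNcard : Nat.card ↥N = 4 * s ^ 2 := by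
      obtain ⟨k, hk⟩ := hNdvd
      rcases k with _ | _ | k
      · omega
      · omega
      · exfalso
        have : Nat.card ↥N ≤ 2 * s ^ 2 := by nlinarith [Nat.card_pos (α := ↥N)]
        omega
    have hNeq : N = MulAction.stabilizer G c₀ :=
      Subgroup.eq_of_le_of_card_ge hNle (by omega)
    have hNnormal : N.Normal := by
      constructor
      intro a ha g x
      have h1 : a • (g⁻¹ • x) ∈ MulAction.orbit (↥T) (g⁻¹ • x) := ha _
      have h2 := horbsmul g _ _ h1
      rw [smul_inv_smul] at h2
      rw [show (g * a * g⁻¹) • x = g • (a • (g⁻¹ • x)) by rw [← mul_smul, ← mul_smul]]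
      exact h2
    letI := hNnormal
    have hq3 : Nat.card (G ⧸ N) = 3 := by
      have := Subgroup.card_eq_card_quotient_mul_card_subgroup N
      rw [hG, hNcard] at this
      have h12 : 12 * s ^ 2 = 3 * (4 * s ^ 2) := by ring
      rw [h12] at this
      have := Nat.eq_of_mul_eq_mul_right (by positivity : 0 < 4 * s ^ 2) this.symm
      omega
    have hinvN : ∀ w : G, w * w = 1 → w ∈ N := by
      intro w hw
      have h3 : (QuotientGroup.mk w : G ⧸ N) ^ 3 = 1 := by
        rw [← hq3]
        exact pow_card_eq_one'
      have h2 : (QuotientGroup.mk w : G ⧸ N) ^ 2 = 1 := by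
        rw [← QuotientGroup.mk_pow, sq, hw, QuotientGroup.mk_one]
      have h1 : (QuotientGroup.mk w : G ⧸ N) = 1 := by
        have : (QuotientGroup.mk w : G ⧸ N) =
            ((QuotientGroup.mk w : G ⧸ N)) ^ 3 * (((QuotientGroup.mk w : G ⧸ N)) ^ 2)⁻¹ := by
          group
        rw [this, h3, h2]
        simp
      exact (QuotientGroup.eq_one_iff w).mp h1
    have hNtop : N = ⊤ := by
      rw [eq_top_iff, ← hgen]
      apply Subgroup.closure_le _ |>.mpr
      intro x hx
      rw [SetLike.mem_coe]
      rcases hx with hx | hx | hx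
      · rw [hx]; exact hinvN ρ0 ha
      · rw [hx]; exact hinvN ρ1 hb
      · simp only [Set.mem_singleton_iff] at hx
        rw [hx]; exact hinvN ρ2 hc
    have : Nat.card ↥N = 12 * s ^ 2 := by
      rw [hNtop, ← hG]
      exact Nat.card_congr Subgroup.topEquiv.toEquiv
    omega
  · -- good case
    push_neg at hfix
    
    -- §12 three distinct classes and covering
    set c₁ : Ω := σact g₀ c₀ with hc₁
    set c₂ : Ω := σact g₀ c₁ with hc₂
    have hd01 : c₀ ≠ c₁ := fun h => hfix c₀ h.symm
    have hd12 : c₁ ≠ c₂ := fun h => hfix c₁ h.symm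
    have hd02 : c₀ ≠ c₂ := by
      intro h
      have h2 : σact g₀ c₂ = c₀ := by rw [hc₂, hc₁]; exact σ3 c₀
      rw [← h] at h2
      exact hfix c₀ h2
    letI := Fintype.ofFinite Ω
    have huniv : ∀ ω : Ω, ω = c₀ ∨ ω = c₁ ∨ ω = c₂ := by
      have hcard3 : ({c₀, c₁, c₂} : Finset Ω).card = 3 := by
        rw [Finset.card_insert_of_notMem (by
            simp only [Finset.mem_insert, Finset.mem_singleton]
            push_neg
            exact ⟨hd01, hd02⟩),
          Finset.card_insert_of_notMem (by
            simp only [Finset.mem_singleton]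
            exact hd12),
          Finset.card_singleton]
      have huq : ({c₀, c₁, c₂} : Finset Ω) = Finset.univ := by
        apply Finset.eq_univ_of_card
        rw [hcard3, ← Nat.card_eq_fintype_card, horb]
      intro ω
      have hω : ω ∈ ({c₀, c₁, c₂} : Finset Ω) := huq ▸ Finset.mem_univ ω
      simpa [Finset.mem_insert] using hω
    have hcoverX : ∀ x : X, x ∈ MulAction.orbit (↥T) x₀ ∨ x ∈ MulAction.orbit (↥T) (g₀ • x₀)
        ∨ x ∈ MulAction.orbit (↥T) (g₀ • (g₀ • x₀)) := by
      intro x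
      rcases huniv (Quotient.mk'' x) with h | h | h
      · left
        rw [hc₀] at h
        exact Quotient.eq''.mp h
      · right; left
        rw [hc₁, hc₀, σmk] at h
        exact Quotient.eq''.mp h
      · right; right
        rw [hc₂, hc₁, hc₀, σmk, σmk] at h
        exact Quotient.eq''.mp h
    -- §13 the triple intersection of stabilizers is trivial
    have htriple : ∀ t : G, t ∈ K → g₀⁻¹ * t * g₀ ∈ K →
        g₀⁻¹ * (g₀⁻¹ * t * g₀) * g₀ ∈ K → t = 1 := by
      intro t h0 h1 h2
      apply hfaith
      intro x
      have htT : t ∈ T := h0.1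
      rcases hcoverX x with hx | hx | hx
      · obtain ⟨t', ht'⟩ := MulAction.mem_orbit_iff.mp hx
        rw [← ht']
        show t • ((t' : G) • x₀) = (t' : G) • x₀
        rw [smul_smul, hcommUV t htT t' t'.2, ← smul_smul,
          MulAction.mem_stabilizer_iff.mp h0.2]
      · obtain ⟨t', ht'⟩ := MulAction.mem_orbit_iff.mp hx
        rw [← ht']
        show t • ((t' : G) • (g₀ • x₀)) = (t' : G) • (g₀ • x₀)
        have e1 : t * ((t' : G) * g₀) = (t' : G) * g₀ * (g₀⁻¹ * t * g₀) := by
          rw [← mul_assoc, hcommUV t htT t' t'.2]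
          group
        rw [show t • ((t' : G) • (g₀ • x₀)) = (t * ((t' : G) * g₀)) • x₀ from by
            rw [← mul_smul, ← mul_smul, mul_assoc],
          e1, mul_smul, MulAction.mem_stabilizer_iff.mp h1.2, mul_smul]
      · obtain ⟨t', ht'⟩ := MulAction.mem_orbit_iff.mp hx
        rw [← ht']
        show t • ((t' : G) • (g₀ • (g₀ • x₀))) = (t' : G) • (g₀ • (g₀ • x₀))
        have hx2 : g₀ • (g₀ • x₀) = (g₀ * g₀) • x₀ := (mul_smul _ _ _).symm
        have e2 : t * ((t' : G) * (g₀ * g₀)) =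
            (t' : G) * (g₀ * g₀) * (g₀⁻¹ * (g₀⁻¹ * t * g₀) * g₀) := by
          rw [← mul_assoc, hcommUV t htT t' t'.2]
          group
        rw [hx2,
          show t • ((t' : G) • ((g₀ * g₀) • x₀)) = (t * ((t' : G) * (g₀ * g₀))) • x₀ from by
            rw [← mul_smul, ← mul_smul, mul_assoc],
          e2, mul_smul, MulAction.mem_stabilizer_iff.mp h2.2, mul_smul]
    -- §14 torsion subgroups
    have mkQ : ∀ p : ℕ, ∃ Q : Subgroup G, ∀ x : G, (x ∈ Q ↔ x ∈ T ∧ x ^ p = 1) := by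
      intro p
      refine ⟨{ carrier := {x : G | x ∈ T ∧ x ^ p = 1},
                one_mem' := ⟨one_mem T, one_pow p⟩,
                mul_mem' := ?_, inv_mem' := ?_ }, fun x => Iff.rfl⟩
      · rintro a b ⟨haT, hap⟩ ⟨hbT, hbp⟩
        refine ⟨mul_mem haT hbT, ?_⟩
        rw [(show Commute a b from hcommUV a haT b hbT).mul_pow, hap, hbp, one_mul]
      · rintro a ⟨haT, hap⟩
        exact ⟨inv_mem haT, by rw [inv_pow, hap, inv_one]⟩
    have mkQK : ∀ p : ℕ, ∃ Q : Subgroup G, ∀ x : G, (x ∈ Q ↔ x ∈ K ∧ x ^ p = 1) := by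
      intro p
      refine ⟨{ carrier := {x : G | x ∈ K ∧ x ^ p = 1},
                one_mem' := ⟨one_mem K, one_pow p⟩,
                mul_mem' := ?_, inv_mem' := ?_ }, fun x => Iff.rfl⟩
      · rintro a b ⟨haK, hap⟩ ⟨hbK, hbp⟩
        refine ⟨mul_mem haK hbK, ?_⟩
        rw [(show Commute a b from hcommUV a haK.1 b hbK.1).mul_pow, hap, hbp, one_mul]
      · rintro a ⟨haK, hap⟩
        exact ⟨inv_mem haK, by rw [inv_pow, hap, inv_one]⟩
    have hdvd1 : ∀ a b : ℕ, u ^ a * v ^ b = 1 → s ∣ a ∧ s ∣ b := by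
      intro a b hab
      have hua : u ^ a = u ^ (a % s) := pow_eq_pow_mod a hus
      have hvb : v ^ b = v ^ (b % s) := pow_eq_pow_mod b hvs
      have h1 : Fsub (⟨a % s, Nat.mod_lt a hspos⟩, ⟨b % s, Nat.mod_lt b hspos⟩) =
          Fsub (⟨0, hspos⟩, ⟨0, hspos⟩) := by
        apply Subtype.ext
        show u ^ (a % s) * v ^ (b % s) = u ^ (0 : ℕ) * v ^ (0 : ℕ)
        rw [← hua, ← hvb, hab]
        simp
      have h2 := hFbij.injective h1
      have h3 := congrArg (fun q : Fin s × Fin s => (q.1 : ℕ)) h2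
      have h4 := congrArg (fun q : Fin s × Fin s => (q.2 : ℕ)) h2
      simp only at h3 h4
      exact ⟨Nat.dvd_of_mod_eq_zero h3, Nat.dvd_of_mod_eq_zero h4⟩
    have htorK : ∀ p : ℕ, p.Prime → Nat.card {x : ↥K // x ^ p = 1} ≤ p := by
      intro p hp
      obtain ⟨Kp, hKp⟩ := mkQK p
      have ecard : Nat.card {x : ↥K // x ^ p = 1} = Nat.card ↥Kp := by
        apply Nat.card_congr
        refine ⟨fun a => ⟨(a.1 : G), (hKp _).mpr ⟨a.1.2, ?_⟩⟩,
                fun b => ⟨⟨b.1, ((hKp _).mp b.2).1⟩, ?_⟩, fun a => ?_, fun b => ?_⟩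
        · have h5 := congrArg Subtype.val a.2
          simpa using h5
        · apply Subtype.ext
          simpa using ((hKp _).mp b.2).2
        · rfl
        · rfl
      rw [ecard]
      by_cases hps : p ∣ s
      · obtain ⟨Q, hQ⟩ := mkQ p
        have hKpQ : Kp ≤ Q := by
          intro x hx
          obtain ⟨hxK, hxp⟩ := (hKp x).mp hx
          exact (hQ x).mpr ⟨hxK.1, hxp⟩
        set sp := s / p with hsp
        have hspp : sp * p = s := Nat.div_mul_cancel hps
        have hppos : 0 < p := hp.pos
        have hsppos : 0 < sp := Nat.div_pos (Nat.le_of_dvd hspos hps) hppos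
        have hmemQ : ∀ q : Fin p × Fin p, u ^ (sp * (q.1 : ℕ)) * v ^ (sp * (q.2 : ℕ)) ∈ Q := by
          intro q
          apply (hQ _).mpr
          refine ⟨mul_mem (pow_mem hum _) (pow_mem hvm _), ?_⟩
          rw [(hCuv.pow_pow _ _).mul_pow, ← pow_mul, ← pow_mul,
            show sp * (q.1 : ℕ) * p = s * (q.1 : ℕ) by rw [← hspp]; ring,
            show sp * (q.2 : ℕ) * p = s * (q.2 : ℕ) by rw [← hspp]; ring,
            pow_mul, pow_mul, hus, hvs, one_pow, one_pow, one_mul]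
        set F2 : Fin p × Fin p → ↥Q := fun q => ⟨_, hmemQ q⟩ with hF2
        have hlt : ∀ i : Fin p, sp * (i : ℕ) < s := by
          intro i
          have h1 : sp * ((i : ℕ) + 1) ≤ sp * p := Nat.mul_le_mul_left sp (Nat.succ_le_of_lt i.2)
          have h2 : sp * ((i : ℕ) + 1) = sp * (i : ℕ) + sp := by ring
          omega
        have hF2inj : Function.Injective F2 := by
          intro q q' h
          have h2 : u ^ (sp * (q.1 : ℕ)) * v ^ (sp * (q.2 : ℕ)) =
              u ^ (sp * (q'.1 : ℕ)) * v ^ (sp * (q'.2 : ℕ)) := congrArg Subtype.val h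
          have h3 : Fsub (⟨sp * (q.1 : ℕ), hlt q.1⟩, ⟨sp * (q.2 : ℕ), hlt q.2⟩) =
              Fsub (⟨sp * (q'.1 : ℕ), hlt q'.1⟩, ⟨sp * (q'.2 : ℕ), hlt q'.2⟩) := Subtype.ext h2
          have h4 := hFbij.injective h3
          have h5 := congrArg (fun q : Fin s × Fin s => (q.1 : ℕ)) h4
          have h6 := congrArg (fun q : Fin s × Fin s => (q.2 : ℕ)) h4
          simp only at h5 h6
          have e5 : (q.1 : ℕ) = (q'.1 : ℕ) := Nat.eq_of_mul_eq_mul_left hsppos h5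
          have e6 : (q.2 : ℕ) = (q'.2 : ℕ) := Nat.eq_of_mul_eq_mul_left hsppos h6
          exact Prod.ext (Fin.ext e5) (Fin.ext e6)
        have hF2surj : Function.Surjective F2 := by
          intro x
          obtain ⟨hxT, hxp⟩ := (hQ (x : G)).mp x.2
          obtain ⟨i, j, hij⟩ := hTfin (x : G) hxT
          have hxpow : u ^ ((i : ℕ) * p) * v ^ ((j : ℕ) * p) = 1 := by
            rw [pow_mul, pow_mul, ← (hCuv.pow_pow _ _).mul_pow, ← hij, hxp]
          obtain ⟨hdi, hdj⟩ := hdvd1 _ _ hxpow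
          have hdi' : sp ∣ (i : ℕ) := by
            obtain ⟨k, hk⟩ := hdi
            refine ⟨k, ?_⟩
            have h7 : (i : ℕ) * p = sp * k * p := by rw [hk, ← hspp]; ring
            exact Nat.eq_of_mul_eq_mul_right hppos h7
          have hdj' : sp ∣ (j : ℕ) := by
            obtain ⟨k, hk⟩ := hdj
            refine ⟨k, ?_⟩
            have h7 : (j : ℕ) * p = sp * k * p := by rw [hk, ← hspp]; ring
            exact Nat.eq_of_mul_eq_mul_right hppos h7
          obtain ⟨a1, hA⟩ := hdi'
          obtain ⟨b1, hB⟩ := hdj'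
          have hap : a1 < p := by
            by_contra hcon
            push_neg at hcon
            have h8 : s ≤ (i : ℕ) := by
              calc s = sp * p := hspp.symm
                _ ≤ sp * a1 := Nat.mul_le_mul_left _ hcon
                _ = (i : ℕ) := hA.symm
            have := i.2
            omega
          have hbp' : b1 < p := by
            by_contra hcon
            push_neg at hcon
            have h8 : s ≤ (j : ℕ) := by
              calc s = sp * p := hspp.symm
                _ ≤ sp * b1 := Nat.mul_le_mul_left _ hcon
                _ = (j : ℕ) := hB.symm
            have := j.2
            omega
          refine ⟨(⟨a1, hap⟩, ⟨b1, hbp'⟩), ?_⟩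
          apply Subtype.ext
          show u ^ (sp * a1) * v ^ (sp * b1) = (x : G)
          rw [hij, hA, hB]
        have hQcard : Nat.card ↥Q = p * p := by
          rw [← Nat.card_eq_of_bijective F2 ⟨hF2inj, hF2surj⟩, Nat.card_prod,
            Nat.card_eq_fintype_card, Fintype.card_fin]
        have hQconj : ∀ (g x : G), x ∈ Q → g * x * g⁻¹ ∈ Q := by
          intro g x hx
          obtain ⟨hxT, hxp⟩ := (hQ x).mp hx
          refine (hQ _).mpr ⟨hconjT g x hxT, ?_⟩
          rw [show g * x * g⁻¹ = (MulAut.conj g) x from rfl, ← map_pow, hxp, map_one]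
        by_contra hcon
        push_neg at hcon
        have hdvdQ : Nat.card ↥Kp ∣ p * p := hQcard ▸ Subgroup.card_dvd_of_le hKpQ
        have hcard2 : Nat.card ↥Kp = p * p := by
          have hpp2 : Nat.card ↥Kp ∣ p ^ 2 := by rw [sq]; exact hdvdQ
          obtain ⟨k2, hk2, hdk⟩ := (Nat.dvd_prime_pow hp).mp hpp2
          interval_cases k2
          · exfalso; rw [pow_zero] at hdk; have := hp.two_le; omega
          · exfalso; rw [pow_one] at hdk; omega
          · rw [hdk, sq]
        have hKpQeq : Kp = Q :=
          Subgroup.eq_of_le_of_card_ge hKpQ (by rw [hQcard, hcard2])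
        have hQtriv : ∀ x ∈ Q, x = 1 := by
          intro x hx
          apply htriple
          · exact ((hKp x).mp (hKpQeq ▸ hx : x ∈ Kp)).1
          · have h9 := hQconj g₀⁻¹ x hx
            rw [inv_inv] at h9
            exact ((hKp _).mp (hKpQeq ▸ h9 : _ ∈ Kp)).1
          · have h9 := hQconj g₀⁻¹ x hx
            rw [inv_inv] at h9
            have h10 := hQconj g₀⁻¹ _ h9
            rw [inv_inv] at h10
            exact ((hKp _).mp (hKpQeq ▸ h10 : _ ∈ Kp)).1
        have hQle1 : Nat.card ↥Q ≤ 1 := by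
          have hinj : Function.Injective (fun _ : ↥Q => (0 : Fin 1)) := by
            intro x y _
            apply Subtype.ext
            rw [hQtriv x.1 x.2, hQtriv y.1 y.2]
          simpa using Nat.card_le_card_of_injective _ hinj
        have := hp.two_le
        omega
      · have hall1 : ∀ x ∈ Kp, x = 1 := by
          intro x hx
          obtain ⟨hxK, hxp⟩ := (hKp x).mp hx
          have hxs : x ^ s = 1 := hexpT x hxK.1
          have h1 : orderOf x ∣ p := orderOf_dvd_of_pow_eq_one hxp
          have h2 : orderOf x ∣ s := orderOf_dvd_of_pow_eq_one hxs
          have hco : Nat.Coprime p s := (Nat.Prime.coprime_iff_not_dvd hp).mpr hps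
          have h3 : orderOf x ∣ 1 := by
            have h4 := Nat.dvd_gcd h1 h2
            rwa [Nat.Coprime.gcd_eq_one hco] at h4
          rw [Nat.dvd_one] at h3
          exact orderOf_eq_one_iff.mp h3
        have hKple1 : Nat.card ↥Kp ≤ 1 := by
          have hinj : Function.Injective (fun _ : ↥Kp => (0 : Fin 1)) := by
            intro x y _
            apply Subtype.ext
            rw [hall1 x.1 x.2, hall1 y.1 y.2]
          simpa using Nat.card_le_card_of_injective _ hinj
        have := hp.two_le
        omega
    -- §15 conclude
    letI : CommGroup ↥K := { (inferInstance : Group ↥K) with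
      mul_comm := fun a b => Subtype.ext (hcommUV (a : G) a.2.1 (b : G) b.2.1) }
    have hexpK : ∀ x : ↥K, x ^ s = 1 := by
      intro x
      apply Subtype.ext
      simpa using hexpT (x : G) x.2.1
    have hKdvd : Nat.card ↥K ∣ s := card_dvd_of_small_torsion hspos htorK hexpK
    set k := Nat.card ↥K with hkdef
    have hkpos : 0 < k := Nat.card_pos
    obtain ⟨a, hA⟩ := hKdvd
    have hapos : 0 < a := by
      rcases Nat.eq_zero_or_pos a with h | h
      · rw [h, mul_zero] at hA; omega
      · exact h
    have hmas : m = a * s := by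
      have h1 : m * k = s * s := by rw [hOS, sq]
      have h2 : m * k = a * s * k := by
        rw [h1]
        calc s * s = (k * a) * s := by rw [← hA]
          _ = a * s * k := by ring
      exact Nat.eq_of_mul_eq_mul_right hkpos h2
    refine ⟨a, hapos, ⟨k, by rw [hA]; ring⟩, ?_, ?_⟩
    · intro x
      rw [horbcard x x₀, ← hmas]
    · rw [← hn, hXcard, hmas]
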